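/- arXiv:2308.14733 — 2 statements merged into one kernel-verified Lean document; each statement's English description precedes it below -/
import Mathlib

section
/- Let n,m ≥ 1, γ ≥ 0, and let π₁,…,π_m be independent draws from a γ-imperfect shuffler on n elements. Let T ⊆ {1,…,n} be a fixed set of size s with 1 ≤ s ≤ n−1. Then for every integer k with 0 ≤ k ≤ min(s, n−s), the probability that π_k'(T) = T for every k' ∈ {1,…,m} (i.e., no edge between T and its complement in the communication graph) is at most exp(k·m·γ)·C(⌊n/2⌋, k)^{−m}, where C(·,·) denotes the binomial coefficient. -/
open Finset

/-- The swap distance between two permutations. -/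
noncomputable def swapDist {n : ℕ} (π π' : Equiv.Perm (Fin n)) : ℕ :=
  sInf {t | ∃ l : List (Equiv.Perm (Fin n)),
    (∀ τ ∈ l, τ.IsSwap) ∧ l.length = t ∧ π' = π * l.prod}

/-- A shuffler on `n` elements: a probability mass function on permutations of `Fin n`. -/
def IsShuffler {n : ℕ} (S : Equiv.Perm (Fin n) → ℝ) : Prop :=
  (∀ π, 0 ≤ S π) ∧ ∑ π : Equiv.Perm (Fin n), S π = 1

/-- A `γ`-imperfect shuffler. -/
def IsImperfectShuffler {n : ℕ} (γ : ℝ) (S : Equiv.Perm (Fin n) → ℝ) : Prop :=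
  IsShuffler S ∧
    ∀ π π' : Equiv.Perm (Fin n),
      S π ≤ Real.exp (γ * (swapDist π π' : ℝ)) * S π'



section SwapProd
variable {α : Type*} [DecidableEq α]

lemma swapProd_fixed (L : List (α × α)) (x : α)
    (h1 : x ∉ L.map Prod.fst) (h2 : x ∉ L.map Prod.snd) :
    (L.map fun q => Equiv.swap q.1 q.2).prod x = x := by
  induction L with
  | nil => simp
  | cons q L ih =>
    simp only [List.map_cons, List.mem_cons, not_or] at h1 h2
    simp only [List.map_cons, List.prod_cons, Equiv.Perm.mul_apply]
    rw [ih h1.2 h2.2, Equiv.swap_apply_of_ne_of_ne h1.1 h2.1]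

lemma swapProd_pair (L : List (α × α))
    (hf : (L.map Prod.fst).Nodup) (hs : (L.map Prod.snd).Nodup)
    (hd : ∀ x, x ∈ L.map Prod.fst → x ∈ L.map Prod.snd → False)
    (p : α × α) (hp : p ∈ L) :
    (L.map fun q => Equiv.swap q.1 q.2).prod p.1 = p.2 ∧
    (L.map fun q => Equiv.swap q.1 q.2).prod p.2 = p.1 := by
  induction L with
  | nil => simp at hp
  | cons q L ih =>
    simp only [List.map_cons, List.nodup_cons] at hf hs
    have hd' : ∀ x, x ∈ L.map Prod.fst → x ∈ L.map Prod.snd → False := by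
      intro x a b; exact hd x (by simp [a]) (by simp [b])
    simp only [List.map_cons, List.prod_cons, Equiv.Perm.mul_apply]
    rcases List.mem_cons.mp hp with rfl | hp'
    · have e1 : (L.map fun q => Equiv.swap q.1 q.2).prod p.1 = p.1 :=
        swapProd_fixed L p.1 hf.1 (fun h => hd p.1 (by simp) (by simp [h]))
      have e2 : (L.map fun q => Equiv.swap q.1 q.2).prod p.2 = p.2 :=
        swapProd_fixed L p.2 (fun h => hd p.2 (by simp [h]) (by simp)) hs.1
      rw [e1, e2, Equiv.swap_apply_left, Equiv.swap_apply_right]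
      exact ⟨rfl, rfl⟩
    · have h := ih hf.2 hs.2 hd' hp'
      have hm1 : p.1 ∈ L.map Prod.fst := List.mem_map_of_mem hp'
      have hm2 : p.2 ∈ L.map Prod.snd := List.mem_map_of_mem hp'
      constructor
      · rw [h.1, Equiv.swap_apply_of_ne_of_ne]
        · exact fun e => hd q.1 (by simp) (by rw [← e]; exact List.mem_cons_of_mem _ hm2)
        · exact fun e => hs.1 (e ▸ hm2)
      · rw [h.2, Equiv.swap_apply_of_ne_of_ne]
        · exact fun e => hf.1 (e ▸ hm1)
        · exact fun e => hd p.1 (List.mem_cons_of_mem _ hm1) (by rw [e]; simp)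

end SwapProd

section Cross
variable {n : ℕ}

noncomputable def crossPairs (A B : Finset (Fin n)) : List (Fin n × Fin n) :=
  (A.sort (· ≤ ·)).zip (B.sort (· ≤ ·))

noncomputable def crossList (A B : Finset (Fin n)) : List (Equiv.Perm (Fin n)) :=
  (crossPairs A B).map fun q => Equiv.swap q.1 q.2

noncomputable def crossPerm (A B : Finset (Fin n)) : Equiv.Perm (Fin n) :=
  (crossList A B).prod

variable {A B : Finset (Fin n)}

lemma crossPairs_fst (h : A.card = B.card) :
    (crossPairs A B).map Prod.fst = A.sort (· ≤ ·) :=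
  List.map_fst_zip (by rw [Finset.length_sort, Finset.length_sort, h])

lemma crossPairs_snd (h : A.card = B.card) :
    (crossPairs A B).map Prod.snd = B.sort (· ≤ ·) :=
  List.map_snd_zip (by rw [Finset.length_sort, Finset.length_sort, h])

lemma crossList_length (h : A.card = B.card) : (crossList A B).length = A.card := by
  rw [crossList, List.length_map, crossPairs, List.length_zip,
    Finset.length_sort, Finset.length_sort, h, min_self]

lemma crossPerm_fixed {x : Fin n} (h : A.card = B.card) (hxA : x ∉ A) (hxB : x ∉ B) :
    crossPerm A B x = x := by
  refine swapProd_fixed _ _ ?_ ?_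
  · rw [crossPairs_fst h, Finset.mem_sort]; exact hxA
  · rw [crossPairs_snd h, Finset.mem_sort]; exact hxB

lemma crossPerm_mem_left {x : Fin n} (h : A.card = B.card)
    (hd : ∀ y, y ∈ A → y ∈ B → False) (hxA : x ∈ A) :
    crossPerm A B x ∈ B := by
  have hx : x ∈ (crossPairs A B).map Prod.fst := by
    rw [crossPairs_fst h, Finset.mem_sort]; exact hxA
  obtain ⟨p, hp, he⟩ := List.mem_map.mp hx
  have hpair := swapProd_pair (crossPairs A B)
    (by rw [crossPairs_fst h]; exact Finset.sort_nodup _ _)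
    (by rw [crossPairs_snd h]; exact Finset.sort_nodup _ _)
    (fun y hy1 hy2 => hd y
      (by rwa [crossPairs_fst h, Finset.mem_sort] at hy1)
      (by rwa [crossPairs_snd h, Finset.mem_sort] at hy2)) p hp
  rw [← he, crossPerm, crossList, hpair.1]
  have : p.2 ∈ (crossPairs A B).map Prod.snd := List.mem_map_of_mem hp
  rwa [crossPairs_snd h, Finset.mem_sort] at this

lemma crossPerm_mem_right {x : Fin n} (h : A.card = B.card)
    (hd : ∀ y, y ∈ A → y ∈ B → False) (hxB : x ∈ B) :
    crossPerm A B x ∈ A := by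
  have hx : x ∈ (crossPairs A B).map Prod.snd := by
    rw [crossPairs_snd h, Finset.mem_sort]; exact hxB
  obtain ⟨p, hp, he⟩ := List.mem_map.mp hx
  have hpair := swapProd_pair (crossPairs A B)
    (by rw [crossPairs_fst h]; exact Finset.sort_nodup _ _)
    (by rw [crossPairs_snd h]; exact Finset.sort_nodup _ _)
    (fun y hy1 hy2 => hd y
      (by rwa [crossPairs_fst h, Finset.mem_sort] at hy1)
      (by rwa [crossPairs_snd h, Finset.mem_sort] at hy2)) p hp
  rw [← he, crossPerm, crossList, hpair.2]
  have : p.1 ∈ (crossPairs A B).map Prod.fst := List.mem_map_of_mem hp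
  rwa [crossPairs_fst h, Finset.mem_sort] at this

lemma crossList_isSwap (h : A.card = B.card) (hd : ∀ y, y ∈ A → y ∈ B → False) :
    ∀ τ ∈ crossList A B, τ.IsSwap := by
  intro τ hτ
  obtain ⟨p, hp, he⟩ := List.mem_map.mp hτ
  have h1 : p.1 ∈ A := by
    have : p.1 ∈ (crossPairs A B).map Prod.fst := List.mem_map_of_mem hp
    rwa [crossPairs_fst h, Finset.mem_sort] at this
  have h2 : p.2 ∈ B := by
    have : p.2 ∈ (crossPairs A B).map Prod.snd := List.mem_map_of_mem hp
    rwa [crossPairs_snd h, Finset.mem_sort] at this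
  exact ⟨p.1, p.2, fun e => hd p.1 h1 (e ▸ h2), he.symm⟩

end Cross

section Main

lemma image_mem_iff {n : ℕ} {T : Finset (Fin n)} {π : Equiv.Perm (Fin n)}
    (hπ : T.image ⇑π = T) (z : Fin n) : π z ∈ T ↔ z ∈ T := by
  constructor
  · intro h
    rw [← hπ] at h
    obtain ⟨w, hw, he⟩ := Finset.mem_image.mp h
    rwa [← π.injective he]
  · intro h; rw [← hπ]; exact Finset.mem_image_of_mem _ h

lemma single_draw_bound {n : ℕ} (γ : ℝ) (hγ : 0 ≤ γ)
    (S : Equiv.Perm (Fin n) → ℝ) (hS : IsImperfectShuffler γ S)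
    (T : Finset (Fin n)) (s : ℕ) (hT : T.card = s)
    (k : ℕ) (hks : k ≤ s) (hkn : k ≤ n - s) :
    ((s.choose k * (n - s).choose k : ℕ) : ℝ) *
      ∑ π ∈ Finset.univ.filter (fun π : Equiv.Perm (Fin n) => T.image ⇑π = T), S π
      ≤ Real.exp (γ * k) := by
  classical
  obtain ⟨⟨hpos, hsum⟩, himp⟩ := hS
  set Gf := Finset.univ.filter (fun π : Equiv.Perm (Fin n) => T.image ⇑π = T) with hGf
  set D : Finset (Equiv.Perm (Fin n) × Finset (Fin n) × Finset (Fin n)) :=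
    Gf ×ˢ (T.powersetCard k ×ˢ Tᶜ.powersetCard k) with hD
  set F : Equiv.Perm (Fin n) × Finset (Fin n) × Finset (Fin n) → Equiv.Perm (Fin n) :=
    fun x => x.1 * crossPerm x.2.1 x.2.2 with hF
  have hTc : Tᶜ.card = n - s := by
    rw [Finset.card_compl, hT, Fintype.card_fin]
  -- basic facts for members of D
  have hfacts : ∀ x ∈ D, T.image ⇑x.1 = T ∧ x.2.1 ⊆ T ∧ x.2.1.card = k ∧
      x.2.2 ⊆ Tᶜ ∧ x.2.2.card = k := by
    intro x hx
    rw [hD, Finset.mem_product, Finset.mem_product] at hx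
    obtain ⟨h1, h2, h3⟩ := hx
    rw [hGf, Finset.mem_filter] at h1
    rw [Finset.mem_powersetCard] at h2 h3
    exact ⟨h1.2, h2.1, h2.2, h3.1, h3.2⟩
  have hdisj : ∀ x ∈ D, ∀ y, y ∈ x.2.1 → y ∈ x.2.2 → False := by
    intro x hx y h1 h2
    obtain ⟨_, hA, _, hB, _⟩ := hfacts x hx
    exact (Finset.mem_compl.mp (hB h2)) (hA h1)
  have hcard : ∀ x ∈ D, x.2.1.card = x.2.2.card := by
    intro x hx
    obtain ⟨_, _, h1, _, h2⟩ := hfacts x hx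
    rw [h1, h2]
  -- recovery of A and B from F x
  have hrec : ∀ x ∈ D, x.2.1 = T.filter (fun z => F x z ∉ T) ∧
      x.2.2 = Tᶜ.filter (fun z => F x z ∈ T) := by
    intro x hx
    obtain ⟨hπ, hA, hAc, hB, hBc⟩ := hfacts x hx
    have hc := hcard x hx
    have hd := hdisj x hx
    constructor
    · ext z
      simp only [Finset.mem_filter]
      constructor
      · intro hz
        refine ⟨hA hz, ?_⟩
        have hcz : crossPerm x.2.1 x.2.2 z ∈ x.2.2 := crossPerm_mem_left hc hd hz
        have : crossPerm x.2.1 x.2.2 z ∉ T := Finset.mem_compl.mp (hB hcz)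
        rw [hF]
        simp only [Equiv.Perm.mul_apply]
        exact fun hmem => this ((image_mem_iff hπ _).mp hmem)
      · rintro ⟨hzT, hzn⟩
        by_contra hzA
        have hzB : z ∉ x.2.2 := fun h => (Finset.mem_compl.mp (hB h)) hzT
        have : F x z = x.1 z := by
          rw [hF]; simp only [Equiv.Perm.mul_apply, crossPerm_fixed hc hzA hzB]
        rw [this] at hzn
        exact hzn ((image_mem_iff hπ z).mpr hzT)
    · ext z
      simp only [Finset.mem_filter]
      constructor
      · intro hz
        refine ⟨hB hz, ?_⟩
        have hcz : crossPerm x.2.1 x.2.2 z ∈ x.2.1 := crossPerm_mem_right hc hd hz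
        rw [hF]
        simp only [Equiv.Perm.mul_apply]
        exact (image_mem_iff hπ _).mpr (hA hcz)
      · rintro ⟨hzc, hzm⟩
        by_contra hzB
        have hzA : z ∉ x.2.1 := fun h => (Finset.mem_compl.mp hzc) (hA h)
        have : F x z = x.1 z := by
          rw [hF]; simp only [Equiv.Perm.mul_apply, crossPerm_fixed hc hzA hzB]
        rw [this] at hzm
        exact (Finset.mem_compl.mp hzc) ((image_mem_iff hπ z).mp hzm)
  -- injectivity
  have hinj : ∀ x ∈ D, ∀ y ∈ D, F x = F y → x = y := by
    intro x hx y hy he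
    obtain ⟨hxA, hxB⟩ := hrec x hx
    obtain ⟨hyA, hyB⟩ := hrec y hy
    have hA : x.2.1 = y.2.1 := by rw [hxA, hyA, he]
    have hB : x.2.2 = y.2.2 := by rw [hxB, hyB, he]
    have h1 : x.1 = y.1 := by
      have := he
      rw [hF] at this
      simp only at this
      rw [hA, hB] at this
      exact mul_right_cancel this
    exact Prod.ext h1 (Prod.ext hA hB)
  -- per-term bound
  have hterm : ∀ x ∈ D, Real.exp (-(γ * k)) * S x.1 ≤ S (F x) := by
    intro x hx
    obtain ⟨hπ, hA, hAc, hB, hBc⟩ := hfacts x hx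
    have hc := hcard x hx
    have hd := hdisj x hx
    have hdist : swapDist x.1 (F x) ≤ k := by
      apply Nat.sInf_le
      exact ⟨crossList x.2.1 x.2.2, crossList_isSwap hc hd,
        by rw [crossList_length hc, hAc], rfl⟩
    have h1 : S x.1 ≤ Real.exp (γ * k) * S (F x) :=
      le_trans (himp x.1 (F x)) (mul_le_mul_of_nonneg_right
        (Real.exp_le_exp.mpr (mul_le_mul_of_nonneg_left (Nat.cast_le.mpr hdist) hγ))
        (hpos (F x)))
    calc Real.exp (-(γ * k)) * S x.1
        ≤ Real.exp (-(γ * k)) * (Real.exp (γ * k) * S (F x)) := by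
          apply mul_le_mul_of_nonneg_left h1 (Real.exp_pos _).le
      _ = S (F x) := by rw [← mul_assoc, ← Real.exp_add]; simp
  -- summation chain
  have hchain : ∑ x ∈ D, Real.exp (-(γ * k)) * S x.1 ≤ 1 := by
    calc ∑ x ∈ D, Real.exp (-(γ * k)) * S x.1
        ≤ ∑ x ∈ D, S (F x) := Finset.sum_le_sum hterm
      _ = ∑ σ ∈ D.image F, S σ := (Finset.sum_image hinj).symm
      _ ≤ ∑ σ, S σ := Finset.sum_le_sum_of_subset_of_nonneg (Finset.subset_univ _)
          (fun i _ _ => hpos i)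
      _ = 1 := hsum
  have hsplit : ∑ x ∈ D, S x.1 =
      ((s.choose k * (n - s).choose k : ℕ) : ℝ) * ∑ π ∈ Gf, S π := by
    rw [hD, Finset.sum_product, Finset.mul_sum]
    refine Finset.sum_congr rfl fun π _ => ?_
    rw [show (∑ y ∈ T.powersetCard k ×ˢ Tᶜ.powersetCard k, S (π, y).1)
        = ∑ _y ∈ T.powersetCard k ×ˢ Tᶜ.powersetCard k, S π from rfl]
    rw [Finset.sum_const, nsmul_eq_mul, Finset.card_product, Finset.card_powersetCard,
      Finset.card_powersetCard, hT, hTc]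
  rw [← Finset.mul_sum, hsplit] at hchain
  have hepos : (0:ℝ) < Real.exp (-(γ * k)) := Real.exp_pos _
  rw [← mul_assoc] at hchain
  calc ((s.choose k * (n - s).choose k : ℕ) : ℝ) * ∑ π ∈ Gf, S π
      = Real.exp (γ * k) * (Real.exp (-(γ * k)) *
        (((s.choose k * (n - s).choose k : ℕ) : ℝ) * ∑ π ∈ Gf, S π)) := by
        rw [← mul_assoc, ← Real.exp_add]; simp
    _ ≤ Real.exp (γ * k) * 1 := by
        apply mul_le_mul_of_nonneg_left _ (Real.exp_pos _).le
        rw [← mul_assoc]; exact hchain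
    _ = Real.exp (γ * k) := mul_one _

end Main

/-- for `m` independent draws from a `γ`-imperfect shuffler and a fixed set
`T` of size `s` with `1 ≤ s ≤ n - 1`, for every integer `k` with `0 ≤ k ≤ min s (n - s)`,
the probability that every draw maps `T` onto `T` (no edge between `T` and its complement
in the communication graph) is at most `exp (k * m * γ) * ((⌊n/2⌋).choose k)⁻ᵐ`. -/
theorem no_edge_prob_le_half {n m : ℕ} (hn : 1 ≤ n) (hm : 1 ≤ m) (γ : ℝ) (hγ : 0 ≤ γ)
    (S : Equiv.Perm (Fin n) → ℝ) (hS : IsImperfectShuffler γ S)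
    (T : Finset (Fin n)) (s : ℕ) (hT : T.card = s) (hs1 : 1 ≤ s) (hs2 : s ≤ n - 1)
    (k : ℕ) (hk : k ≤ min s (n - s)) :
    ∑ πs : Fin m → Equiv.Perm (Fin n),
        (if ∀ k', T.image ⇑(πs k') = T then ∏ k', S (πs k') else 0)
      ≤ Real.exp ((k : ℝ) * (m : ℝ) * γ) * (((n / 2).choose k : ℝ) ^ m)⁻¹ := by
  classical
  have hpos := hS.1.1
  have hks : k ≤ s := le_trans hk (min_le_left _ _)
  have hkn : k ≤ n - s := le_trans hk (min_le_right _ _)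
  set g : Equiv.Perm (Fin n) → ℝ := fun π => if T.image ⇑π = T then S π else 0 with hg
  set P : ℝ := ∑ π ∈ Finset.univ.filter (fun π : Equiv.Perm (Fin n) => T.image ⇑π = T), S π
    with hPdef
  have hgP : ∑ π, g π = P := by
    rw [hPdef, Finset.sum_filter]
  have hterm : ∀ πs : Fin m → Equiv.Perm (Fin n),
      (if ∀ k', T.image ⇑(πs k') = T then ∏ k', S (πs k') else 0) = ∏ k', g (πs k') := by
    intro πs
    by_cases h : ∀ k', T.image ⇑(πs k') = T
    · rw [if_pos h]
      exact Finset.prod_congr rfl fun i _ => by rw [hg]; simp [h i]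
    · rw [if_neg h]
      push_neg at h
      obtain ⟨i, hi⟩ := h
      exact (Finset.prod_eq_zero (Finset.mem_univ i) (by simp [hg, hi])).symm
  have hLHS : ∑ πs : Fin m → Equiv.Perm (Fin n),
      (if ∀ k', T.image ⇑(πs k') = T then ∏ k', S (πs k') else 0) = P ^ m := by
    rw [Finset.sum_congr rfl fun πs _ => hterm πs, ← hgP]
    rw [Finset.sum_pow' Finset.univ g m, Fintype.piFinset_univ]
  rw [hLHS]
  -- positivity facts
  have hP0 : 0 ≤ P := Finset.sum_nonneg fun i _ => hpos i
  have hkhalf : k ≤ n / 2 := by omega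
  have hCpos : (0:ℝ) < ((n / 2).choose k : ℝ) := by
    exact_mod_cast Nat.choose_pos hkhalf
  have hNpos : (0:ℝ) < ((s.choose k * (n - s).choose k : ℕ) : ℝ) := by
    exact_mod_cast Nat.mul_pos (Nat.choose_pos hks) (Nat.choose_pos hkn)
  have hNC : ((n / 2).choose k : ℕ) ≤ s.choose k * (n - s).choose k := by
    rcases le_or_gt (n / 2) s with h | h
    · calc (n / 2).choose k ≤ s.choose k := Nat.choose_le_choose k h
        _ = s.choose k * 1 := (mul_one _).symm
        _ ≤ s.choose k * (n - s).choose k :=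
          Nat.mul_le_mul_left _ (Nat.choose_pos hkn)
    · have h2 : n / 2 ≤ n - s := by omega
      calc (n / 2).choose k ≤ (n - s).choose k := Nat.choose_le_choose k h2
        _ ≤ s.choose k * (n - s).choose k :=
          Nat.le_mul_of_pos_left _ (Nat.choose_pos hks)
  have hkey := single_draw_bound γ hγ S hS T s hT k hks hkn
  rw [← hPdef] at hkey
  have hPC : P ≤ Real.exp (γ * k) / ((n / 2).choose k : ℝ) := by
    have h1 : P ≤ Real.exp (γ * k) / ((s.choose k * (n - s).choose k : ℕ) : ℝ) := by
      rw [le_div_iff₀ hNpos]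
      calc P * ((s.choose k * (n - s).choose k : ℕ) : ℝ)
          = ((s.choose k * (n - s).choose k : ℕ) : ℝ) * P := mul_comm _ _
        _ ≤ Real.exp (γ * k) := hkey
    refine le_trans h1 ?_
    apply div_le_div_of_nonneg_left (Real.exp_pos _).le hCpos
    exact_mod_cast hNC
  calc P ^ m ≤ (Real.exp (γ * k) / ((n / 2).choose k : ℝ)) ^ m :=
        pow_le_pow_left₀ hP0 hPC m
    _ = Real.exp ((k : ℝ) * (m : ℝ) * γ) * (((n / 2).choose k : ℝ) ^ m)⁻¹ := by
        rw [div_pow, ← Real.exp_nat_mul, div_eq_mul_inv]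
        norm_num
        left
        ring
end

section
/- Fix integers n,m ≥ 1 and q ≥ 2, and fix a γ-imperfect shuffler used in the m-message n-player split-and-mix protocol P = P_{m,n} over Z_q. Let (X, X') be drawn uniformly at random from all pairs of vectors in (Z_q)^n having the same coordinate sum. Then E_{X,X'}[TVD(P(X), P(X'))] ≤ sqrt( q^{mn−1}·Pr[R(X) = S^{-1}·S'·R'(X)] − 1 ), where R, R' are independent split randomizers, S, S' are independent draws of the m shuffling permutations, and S^{-1}·S'·M denotes applying the permutations of S' followed by the inverses of the permutations of S to the columns of the message matrix M. -/
open Finset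

/-- An `n × m` message matrix is valid for the input `x` if the `i`-th row sums to `x i`. -/
def validMat {n m q : ℕ} (x : Fin n → ZMod q) (A : Fin n → Fin m → ZMod q) : Prop :=
  ∀ i, ∑ j, A i j = x i

/-- Permute, for each `j`, the `j`-th messages of the `n` players according to `πs j`. -/
def applyShuffle {n m q : ℕ} (πs : Fin m → Equiv.Perm (Fin n))
    (A : Fin n → Fin m → ZMod q) : Fin n → Fin m → ZMod q :=
  fun i j => A ((πs j)⁻¹ i) j

/-- The output distribution of the `m`-message `n`-player split-and-mix protocol on input
`x`, where the `m` shuffling permutations are drawn independently from the shuffler `S1`. -/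
noncomputable def protOutInd {n q : ℕ} (m : ℕ) (S1 : Equiv.Perm (Fin n) → ℝ)
    (x : Fin n → ZMod q) (B : Fin n → Fin m → ZMod q) : ℝ :=
  ∑ πs : Fin m → Equiv.Perm (Fin n),
    (∏ k, S1 (πs k)) *
      ((Nat.card {A : Fin n → Fin m → ZMod q //
          validMat x A ∧ applyShuffle πs A = B} : ℝ) /
        (Nat.card {A : Fin n → Fin m → ZMod q // validMat x A} : ℝ))

/-- Total variation distance between two probability mass functions on message matrices. -/
noncomputable def tvdMat {n m q : ℕ} [NeZero q]
    (μ ν : (Fin n → Fin m → ZMod q) → ℝ) : ℝ :=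
  2⁻¹ * ∑ B : Fin n → Fin m → ZMod q, |μ B - ν B|

/-- The set of pairs of input vectors in `(Z_q)^n` with equal coordinate sums. -/
def eqSumPairs (n q : ℕ) [NeZero q] :
    Finset ((Fin n → ZMod q) × (Fin n → ZMod q)) :=
  Finset.univ.filter (fun p => ∑ i, p.1 i = ∑ i, p.2 i)

/-- `Pr[R(x) = S⁻¹ · S' · R'(x)]` for a fixed input `x`, where `S, S'` are independent
tuples of `m` permutations drawn independently from `S1`, and `R, R'` are independent
split randomizers. -/
noncomputable def unshuffledCollision {n q : ℕ} (m : ℕ) (S1 : Equiv.Perm (Fin n) → ℝ)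
    (x : Fin n → ZMod q) : ℝ :=
  ∑ πs : Fin m → Equiv.Perm (Fin n), ∑ πs' : Fin m → Equiv.Perm (Fin n),
    (∏ k, S1 (πs k)) * (∏ k, S1 (πs' k)) *
      ((Nat.card {p : (Fin n → Fin m → ZMod q) × (Fin n → Fin m → ZMod q) //
          validMat x p.1 ∧ validMat x p.2 ∧
            p.1 = applyShuffle (fun k => (πs k)⁻¹ * πs' k) p.2} : ℝ) /
        ((Nat.card {A : Fin n → Fin m → ZMod q // validMat x A} : ℝ)) ^ 2)


section AuxCounting

open Finset

lemma card_sumFiber {ι : Type*} [Fintype ι] [DecidableEq ι] [Nonempty ι] (q : ℕ) [NeZero q]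
    (c : ZMod q) :
    (Finset.univ.filter fun f : ι → ZMod q => ∑ i, f i = c).card
      = q ^ (Fintype.card ι - 1) := by
  classical
  obtain ⟨i0⟩ := ‹Nonempty ι›
  have sum_split : ∀ f : ι → ZMod q, f i0 + ∑ i ∈ univ \ {i0}, f i = ∑ i, f i := by
    intro f
    have := Finset.sum_update_of_mem (Finset.mem_univ i0) f (f i0)
    simpa [Function.update_eq_self] using this.symm
  have key : ∀ c' : ZMod q,
      (Finset.univ.filter fun f : ι → ZMod q => ∑ i, f i = c').card
        = (Finset.univ.filter fun f : ι → ZMod q => ∑ i, f i = 0).card := by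
    intro c'
    apply Finset.card_nbij' (i := fun f => Function.update f i0 (f i0 - c'))
      (j := fun f => Function.update f i0 (f i0 + c'))
    · intro f hf
      simp only [Finset.mem_coe, Finset.mem_filter, Finset.mem_univ, true_and] at hf ⊢
      rw [Finset.sum_update_of_mem (Finset.mem_univ i0)]
      have h := sum_split f
      rw [hf] at h
      linear_combination h
    · intro f hf
      simp only [Finset.mem_coe, Finset.mem_filter, Finset.mem_univ, true_and] at hf ⊢
      rw [Finset.sum_update_of_mem (Finset.mem_univ i0)]
      have h := sum_split f
      rw [hf] at h
      linear_combination h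
    · intro f _
      simp [Function.update_idem, Function.update_self, Function.update_eq_self]
    · intro f _
      simp [Function.update_idem, Function.update_self, Function.update_eq_self]
  have total : ∑ c' : ZMod q,
      (Finset.univ.filter fun f : ι → ZMod q => ∑ i, f i = c').card
        = q ^ Fintype.card ι := by
    rw [← Finset.card_eq_sum_card_fiberwise (f := fun f : ι → ZMod q => ∑ i, f i)
      (t := Finset.univ) (fun f _ => Finset.mem_univ _)]
    simp [ZMod.card]
  have h2 : q * (Finset.univ.filter fun f : ι → ZMod q => ∑ i, f i = 0).card
      = q ^ Fintype.card ι := by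
    rw [← total, Finset.sum_congr rfl fun c' _ => key c', Finset.sum_const, Finset.card_univ,
      ZMod.card, smul_eq_mul]
  have hpow : q ^ Fintype.card ι = q * q ^ (Fintype.card ι - 1) := by
    conv_lhs => rw [← Nat.succ_pred_eq_of_pos (Fintype.card_pos (α := ι))]
    rw [pow_succ, mul_comm]; rfl
  rw [key c]
  exact Nat.eq_of_mul_eq_mul_left (Nat.pos_of_ne_zero (NeZero.ne q)) (by rw [h2, hpow])

variable {n m q : ℕ} [NeZero q]

instance validMat.decPred (x : Fin n → ZMod q) :
    DecidablePred (validMat (m := m) (q := q) x) := fun _ =>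
  decidable_of_iff _ (Iff.rfl : (∀ i, _ = _) ↔ validMat x _)

lemma card_validMat_filter (hm : 1 ≤ m) (x : Fin n → ZMod q) :
    (Finset.univ.filter fun A : Fin n → Fin m → ZMod q => validMat x A).card
      = q ^ (n * (m - 1)) := by
  classical
  have : Nonempty (Fin m) := ⟨⟨0, hm⟩⟩
  have hrow : ∀ c : ZMod q,
      (Finset.univ.filter fun v : Fin m → ZMod q => ∑ j, v j = c).card = q ^ (m - 1) := by
    intro c
    simpa using card_sumFiber (ι := Fin m) q c
  rw [← Fintype.card_subtype]
  have e : {A : Fin n → Fin m → ZMod q // validMat x A}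
      ≃ ∀ i : Fin n, {v : Fin m → ZMod q // ∑ j, v j = x i} :=
    (Equiv.subtypeEquivRight (p := fun A : Fin n → Fin m → ZMod q => validMat x A)
        (q := fun A : Fin n → Fin m → ZMod q => ∀ i, ∑ j, A i j = x i)
        (fun A => Iff.rfl)).trans (Equiv.subtypePiEquivPi
        (p := fun (i : Fin n) (v : Fin m → ZMod q) => ∑ j, v j = x i))
  rw [Fintype.card_congr e, Fintype.card_pi]
  have : ∀ i : Fin n, Fintype.card {v : Fin m → ZMod q // ∑ j, v j = x i} = q ^ (m - 1) := by
    intro i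
    rw [Fintype.card_subtype]
    exact hrow (x i)
  rw [Finset.prod_congr rfl fun i _ => this i, Finset.prod_const, Finset.card_univ,
    Fintype.card_fin, ← pow_mul, mul_comm (m-1) n]

lemma card_validMat (hm : 1 ≤ m) (x : Fin n → ZMod q) :
    Nat.card {A : Fin n → Fin m → ZMod q // validMat x A} = q ^ (n * (m - 1)) := by
  classical
  rw [Nat.card_eq_fintype_card, Fintype.card_subtype, card_validMat_filter hm x]

end AuxCounting

section AuxShuffle

open Finset

variable {n m q : ℕ} [NeZero q]

lemma applyShuffle_mul (σ τ : Fin m → Equiv.Perm (Fin n)) (A : Fin n → Fin m → ZMod q) :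
    applyShuffle σ (applyShuffle τ A) = applyShuffle (fun k => σ k * τ k) A := by
  funext i j
  simp [applyShuffle, mul_inv_rev]

lemma applyShuffle_inv_self (πs : Fin m → Equiv.Perm (Fin n)) (A : Fin n → Fin m → ZMod q) :
    applyShuffle (fun k => (πs k)⁻¹) (applyShuffle πs A) = A := by
  funext i j
  simp [applyShuffle]

lemma applyShuffle_self_inv (πs : Fin m → Equiv.Perm (Fin n)) (A : Fin n → Fin m → ZMod q) :
    applyShuffle πs (applyShuffle (fun k => (πs k)⁻¹) A) = A := by
  funext i j
  simp [applyShuffle]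

def shuffleEquiv (πs : Fin m → Equiv.Perm (Fin n)) :
    (Fin n → Fin m → ZMod q) ≃ (Fin n → Fin m → ZMod q) where
  toFun := applyShuffle πs
  invFun := applyShuffle (fun k => (πs k)⁻¹)
  left_inv := applyShuffle_inv_self πs
  right_inv := applyShuffle_self_inv πs

lemma sum_sum_applyShuffle (πs : Fin m → Equiv.Perm (Fin n)) (A : Fin n → Fin m → ZMod q) :
    ∑ i, ∑ j, applyShuffle πs A i j = ∑ i, ∑ j, A i j := by
  rw [Finset.sum_comm, Finset.sum_comm (s := Finset.univ) (f := fun i j => A i j)]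
  refine Finset.sum_congr rfl fun j _ => ?_
  exact Equiv.sum_comp ((πs j)⁻¹) (fun i => A i j)

lemma card_single (πs : Fin m → Equiv.Perm (Fin n)) (x : Fin n → ZMod q)
    (B : Fin n → Fin m → ZMod q) :
    (Nat.card {A : Fin n → Fin m → ZMod q // validMat x A ∧ applyShuffle πs A = B} : ℝ)
      = if validMat x (applyShuffle (fun k => (πs k)⁻¹) B) then 1 else 0 := by
  split_ifs with h
  · norm_cast
    rw [Nat.card_eq_one_iff_unique]
    constructor
    · constructor
      rintro ⟨A, -, hA⟩ ⟨A', -, hA'⟩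
      apply Subtype.ext
      have h1 : A = applyShuffle (fun k => (πs k)⁻¹) B := by
        rw [← hA, applyShuffle_inv_self]
      have h2 : A' = applyShuffle (fun k => (πs k)⁻¹) B := by
        rw [← hA', applyShuffle_inv_self]
      simp [h1, h2]
    · exact ⟨⟨applyShuffle (fun k => (πs k)⁻¹) B, h, applyShuffle_self_inv πs B⟩⟩
  · have : IsEmpty {A : Fin n → Fin m → ZMod q // validMat x A ∧ applyShuffle πs A = B} := by
      constructor
      rintro ⟨A, hv, hA⟩
      apply h
      rw [← hA, applyShuffle_inv_self]
      exact hv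
    rw [Nat.card_of_isEmpty]
    norm_num

lemma protOutInd_eq (hm : 1 ≤ m) (S1 : Equiv.Perm (Fin n) → ℝ) (x : Fin n → ZMod q)
    (B : Fin n → Fin m → ZMod q) :
    protOutInd m S1 x B = (∑ πs : Fin m → Equiv.Perm (Fin n), (∏ k, S1 (πs k)) *
      (if validMat x (applyShuffle (fun k => (πs k)⁻¹) B) then 1 else 0)) /
        (q : ℝ) ^ (n * (m - 1)) := by
  unfold protOutInd
  rw [Finset.sum_div]
  refine Finset.sum_congr rfl fun πs _ => ?_
  rw [card_single, card_validMat hm x, mul_div_assoc]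
  push_cast
  ring

lemma sum_W {S1 : Equiv.Perm (Fin n) → ℝ} (hS : IsShuffler S1) :
    ∑ πs : Fin m → Equiv.Perm (Fin n), ∏ k, S1 (πs k) = 1 := by
  rw [← Fintype.prod_sum]
  simp [hS.2]

end AuxShuffle

section AuxDist

open Finset

variable {n m q : ℕ} [NeZero q]

lemma protOutInd_eq_zero (hm : 1 ≤ m) (S1 : Equiv.Perm (Fin n) → ℝ) (x : Fin n → ZMod q)
    (B : Fin n → Fin m → ZMod q) (h : ∑ i, ∑ j, B i j ≠ ∑ i, x i) :
    protOutInd m S1 x B = 0 := by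
  rw [protOutInd_eq hm]
  rw [Finset.sum_eq_zero, zero_div]
  intro πs _
  rw [if_neg, mul_zero]
  intro hv
  apply h
  rw [← sum_sum_applyShuffle (fun k => (πs k)⁻¹) B]
  exact Finset.sum_congr rfl fun i _ => hv i

lemma sum_protOutInd_fiber (hm : 1 ≤ m) {S1 : Equiv.Perm (Fin n) → ℝ} (hS : IsShuffler S1)
    (s : ZMod q) (B : Fin n → Fin m → ZMod q) :
    ∑ x ∈ (Finset.univ.filter fun x : Fin n → ZMod q => ∑ i, x i = s), protOutInd m S1 x B
      = (if ∑ i, ∑ j, B i j = s then 1 else 0) / (q : ℝ) ^ (n * (m - 1)) := by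
  classical
  simp_rw [protOutInd_eq hm, ← Finset.sum_div]
  congr 1
  rw [Finset.sum_comm]
  have key : ∀ πs : Fin m → Equiv.Perm (Fin n),
      ∑ x ∈ (Finset.univ.filter fun x : Fin n → ZMod q => ∑ i, x i = s),
        (∏ k, S1 (πs k)) * (if validMat x (applyShuffle (fun k => (πs k)⁻¹) B) then 1 else 0)
      = (∏ k, S1 (πs k)) * (if ∑ i, ∑ j, B i j = s then 1 else 0) := by
    intro πs
    rw [← Finset.mul_sum]
    congr 1
    set C := applyShuffle (fun k => (πs k)⁻¹) B with hC
    have step : ∀ x : Fin n → ZMod q,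
        (if validMat x C then (1:ℝ) else 0) = if x = (fun i => ∑ j, C i j) then 1 else 0 := by
      intro x
      have hvm : validMat x C ↔ x = fun i => ∑ j, C i j := by
        constructor
        · intro hv; funext i; exact (hv i).symm
        · intro hv i; rw [hv]
      simp [hvm]
    rw [Finset.sum_congr rfl fun x _ => step x]
    rw [Finset.sum_ite_eq' (Finset.univ.filter fun x : Fin n → ZMod q => ∑ i, x i = s)
      (fun i => ∑ j, C i j) (fun _ => (1:ℝ))]
    have hsum : ∑ i, ∑ j, C i j = ∑ i, ∑ j, B i j := sum_sum_applyShuffle _ B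
    by_cases hBs : ∑ i, ∑ j, B i j = s
    · rw [if_pos, if_pos hBs]
      simp [hsum, hBs]
    · rw [if_neg, if_neg hBs]
      simp [hsum, hBs]
  rw [Finset.sum_congr rfl fun πs _ => key πs, ← Finset.sum_mul, sum_W hS, one_mul]

lemma cardPairMat (πs πs' : Fin m → Equiv.Perm (Fin n)) (x : Fin n → ZMod q) :
    (Nat.card {p : (Fin n → Fin m → ZMod q) × (Fin n → Fin m → ZMod q) //
        validMat x p.1 ∧ validMat x p.2 ∧
          p.1 = applyShuffle (fun k => (πs k)⁻¹ * πs' k) p.2} : ℝ)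
      = ∑ B : Fin n → Fin m → ZMod q,
          (if validMat x (applyShuffle (fun k => (πs k)⁻¹) B) then (1:ℝ) else 0) *
          (if validMat x (applyShuffle (fun k => (πs' k)⁻¹) B) then (1:ℝ) else 0) := by
  classical
  set σ : Fin m → Equiv.Perm (Fin n) := fun k => (πs k)⁻¹ * πs' k with hσ
  -- re-index the sum over B by B = applyShuffle πs' A'
  rw [← Equiv.sum_comp (shuffleEquiv (n := n) (m := m) (q := q) πs')
    (fun B => (if validMat x (applyShuffle (fun k => (πs k)⁻¹) B) then (1:ℝ) else 0) *
          (if validMat x (applyShuffle (fun k => (πs' k)⁻¹) B) then (1:ℝ) else 0))]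
  have step : ∀ A' : Fin n → Fin m → ZMod q,
      (if validMat x (applyShuffle (fun k => (πs k)⁻¹) (shuffleEquiv πs' A')) then (1:ℝ) else 0) *
      (if validMat x (applyShuffle (fun k => (πs' k)⁻¹) (shuffleEquiv πs' A')) then (1:ℝ) else 0)
      = if (validMat x (applyShuffle σ A') ∧ validMat x A') then (1:ℝ) else 0 := by
    intro A'
    have h1 : applyShuffle (fun k => (πs k)⁻¹) (shuffleEquiv πs' A') = applyShuffle σ A' := by
      show applyShuffle _ (applyShuffle πs' A') = _
      rw [applyShuffle_mul]
    have h2 : applyShuffle (fun k => (πs' k)⁻¹) (shuffleEquiv πs' A') = A' := by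
      show applyShuffle _ (applyShuffle πs' A') = _
      rw [applyShuffle_inv_self]
    rw [h1, h2, ite_zero_mul_ite_zero]
    simp
  rw [Finset.sum_congr rfl fun A' _ => step A', Finset.sum_boole]
  -- now identify Nat.card with the filter card
  have e : {p : (Fin n → Fin m → ZMod q) × (Fin n → Fin m → ZMod q) //
        validMat x p.1 ∧ validMat x p.2 ∧ p.1 = applyShuffle σ p.2}
      ≃ {A' : Fin n → Fin m → ZMod q // validMat x (applyShuffle σ A') ∧ validMat x A'} :=
    { toFun := fun p => ⟨p.1.2, by
        obtain ⟨h1, h2, h3⟩ := p.2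
        exact ⟨h3 ▸ h1, h2⟩⟩
      invFun := fun A' => ⟨(applyShuffle σ A'.1, A'.1), A'.2.1, A'.2.2, rfl⟩
      left_inv := by
        rintro ⟨⟨A, A'⟩, h1, h2, h3⟩
        apply Subtype.ext
        dsimp
        simp only at h3
        rw [← h3]
      right_inv := by
        rintro ⟨A', h⟩
        rfl }
  rw [Nat.card_congr e, Nat.card_eq_fintype_card, Fintype.card_subtype]

lemma collision_eq (hm : 1 ≤ m) (S1 : Equiv.Perm (Fin n) → ℝ) (x : Fin n → ZMod q) :
    unshuffledCollision m S1 x = ∑ B : Fin n → Fin m → ZMod q, (protOutInd m S1 x B) ^ 2 := by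
  classical
  set a : (Fin m → Equiv.Perm (Fin n)) → (Fin n → Fin m → ZMod q) → ℝ :=
    fun πs B => (∏ k, S1 (πs k)) *
      (if validMat x (applyShuffle (fun k => (πs k)⁻¹) B) then (1:ℝ) else 0) with ha
  have hswap : ∑ πs : Fin m → Equiv.Perm (Fin n), ∑ πs' : Fin m → Equiv.Perm (Fin n),
        ∑ B : Fin n → Fin m → ZMod q, a πs B * a πs' B
      = ∑ B : Fin n → Fin m → ZMod q, (∑ πs : Fin m → Equiv.Perm (Fin n), a πs B) ^ 2 := by
    rw [Finset.sum_congr rfl fun πs _ => Finset.sum_comm (s := (Finset.univ : Finset (Fin m → Equiv.Perm (Fin n)))) (t := (Finset.univ : Finset (Fin n → Fin m → ZMod q))) (f := fun πs' B => a πs B * a πs' B)]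
    rw [Finset.sum_comm]
    refine Finset.sum_congr rfl fun B _ => ?_
    rw [sq, Finset.sum_mul_sum]
  have hLHS : unshuffledCollision m S1 x
      = ∑ πs : Fin m → Equiv.Perm (Fin n), ∑ πs' : Fin m → Equiv.Perm (Fin n),
          (∑ B : Fin n → Fin m → ZMod q, a πs B * a πs' B) / ((q : ℝ) ^ (n * (m - 1))) ^ 2 := by
    unfold unshuffledCollision
    refine Finset.sum_congr rfl fun πs _ => Finset.sum_congr rfl fun πs' _ => ?_
    rw [cardPairMat πs πs' x, card_validMat hm x]
    push_cast
    rw [← mul_div_assoc]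
    congr 1
    rw [Finset.mul_sum]
    refine Finset.sum_congr rfl fun B _ => ?_
    simp only [ha]
    ring
  rw [hLHS]
  simp_rw [← Finset.sum_div]
  rw [hswap, Finset.sum_div]
  refine Finset.sum_congr rfl fun B _ => ?_
  rw [protOutInd_eq hm, div_pow]

end AuxDist

set_option maxHeartbeats 1000000 in
open Finset in
/-- for the split-and-mix protocol with a `γ`-imperfect shuffler, with
`(X, X')` uniform over pairs of equal-sum inputs,
`E[TVD(P(X), P(X'))] ≤ sqrt(q^{mn-1}·Pr[R(X) = S⁻¹·S'·R'(X)] - 1)`. -/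
theorem avg_tvd_le_sqrt_unshuffled {n m q : ℕ} [NeZero q] (hn : 1 ≤ n) (hm : 1 ≤ m)
    (hq : 2 ≤ q) (γ : ℝ) (hγ : 0 ≤ γ)
    (S1 : Equiv.Perm (Fin n) → ℝ) (hS1 : IsImperfectShuffler γ S1) :
    (∑ p ∈ eqSumPairs n q, tvdMat (protOutInd m S1 p.1) (protOutInd m S1 p.2)) /
        ((eqSumPairs n q).card : ℝ)
      ≤ Real.sqrt ((q : ℝ) ^ (m * n - 1) *
          ((∑ p ∈ eqSumPairs n q, unshuffledCollision m S1 p.1) /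
            ((eqSumPairs n q).card : ℝ)) - 1) := by
  classical
  obtain ⟨hS, -⟩ := hS1
  have hq0 : (0:ℝ) < q := by
    have : 0 < q := by omega
    exact_mod_cast this
  have hK0 : (0:ℝ) < (q:ℝ) ^ (m*n - 1) := by positivity
  have hD0 : (0:ℝ) < (q:ℝ) ^ (n*(m-1)) := by positivity
  have hT0 : (0:ℝ) < (q:ℝ) ^ (n-1) := by positivity
  -- decomposition of sums over equal-sum pairs
  have decomp : ∀ f : ((Fin n → ZMod q) × (Fin n → ZMod q)) → ℝ,
      ∑ p ∈ eqSumPairs n q, f p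
        = ∑ s : ZMod q, ∑ x ∈ (Finset.univ.filter fun x : Fin n → ZMod q => ∑ i, x i = s),
            ∑ x' ∈ (Finset.univ.filter fun x : Fin n → ZMod q => ∑ i, x i = s), f (x, x') := by
    intro f
    have h0 : (eqSumPairs n q).filter
        (fun p => (∑ i, p.1 i) ∈ (Finset.univ : Finset (ZMod q))) = eqSumPairs n q :=
      Finset.filter_true_of_mem (fun _ _ => Finset.mem_univ _)
    rw [← h0, ← Finset.sum_fiberwise_eq_sum_filter (eqSumPairs n q) Finset.univ
      (fun p => ∑ i, p.1 i) f]
    refine Finset.sum_congr rfl fun s _ => ?_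
    have h2 : (eqSumPairs n q).filter (fun p => (∑ i, p.1 i) = s)
        = (Finset.univ.filter fun x : Fin n → ZMod q => ∑ i, x i = s) ×ˢ
          (Finset.univ.filter fun x : Fin n → ZMod q => ∑ i, x i = s) := by
      ext p
      simp only [eqSumPairs, Finset.mem_filter, Finset.mem_univ, true_and,
        Finset.mem_product]
      constructor
      · rintro ⟨h1, h2⟩
        exact ⟨h2, h1.symm.trans h2⟩
      · rintro ⟨h1, h2⟩
        exact ⟨h1.trans h2.symm, h1⟩
    rw [h2, Finset.sum_product]
  -- cardinalities
  have cardXs : ∀ s : ZMod q,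
      ((Finset.univ.filter fun x : Fin n → ZMod q => ∑ i, x i = s).card : ℝ)
        = (q:ℝ) ^ (n-1) := by
    intro s
    have : Nonempty (Fin n) := ⟨⟨0, hn⟩⟩
    have h := card_sumFiber (ι := Fin n) q s
    rw [h]
    push_cast [Fintype.card_fin]
    rfl
  have cardP : ((eqSumPairs n q).card : ℝ) = (q:ℝ) * ((q:ℝ) ^ (n-1))^2 := by
    have h1 : ((eqSumPairs n q).card : ℝ) = ∑ p ∈ eqSumPairs n q, (1:ℝ) := by simp
    rw [h1, decomp (fun _ => (1:ℝ))]
    have h2 : ∀ s : ZMod q,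
        ∑ x ∈ (Finset.univ.filter fun x : Fin n → ZMod q => ∑ i, x i = s),
          ∑ _x' ∈ (Finset.univ.filter fun x : Fin n → ZMod q => ∑ i, x i = s), (1:ℝ)
        = ((q:ℝ) ^ (n-1))^2 := by
      intro s
      rw [Finset.sum_const, Finset.sum_const]
      simp only [nsmul_eq_mul, mul_one]
      rw [cardXs s, sq]
    rw [Finset.sum_congr rfl fun s _ => h2 s, Finset.sum_const, Finset.card_univ, ZMod.card,
      nsmul_eq_mul]
  have hP0 : (0:ℝ) < ((eqSumPairs n q).card : ℝ) := by
    rw [cardP]; positivity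
  -- card of total-sum fibers of matrices
  have cardB : ∀ s : ZMod q,
      ((Finset.univ.filter fun B : Fin n → Fin m → ZMod q => ∑ i, ∑ j, B i j = s).card : ℝ)
        = (q:ℝ) ^ (m*n - 1) := by
    intro s
    have hne : Nonempty (Fin n × Fin m) := ⟨(⟨0, hn⟩, ⟨0, hm⟩)⟩
    have hcard : (Finset.univ.filter fun B : Fin n → Fin m → ZMod q => ∑ i, ∑ j, B i j = s).card
        = (Finset.univ.filter fun f : Fin n × Fin m → ZMod q => ∑ p, f p = s).card := by
      apply Finset.card_nbij' (i := fun B (p : Fin n × Fin m) => B p.1 p.2)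
        (j := fun f i j => f (i, j))
      · intro B hB
        simp only [Finset.mem_coe, Finset.mem_filter, Finset.mem_univ, true_and] at hB ⊢
        rw [Fintype.sum_prod_type]
        exact hB
      · intro f hf
        simp only [Finset.mem_coe, Finset.mem_filter, Finset.mem_univ, true_and] at hf ⊢
        rw [← Fintype.sum_prod_type]
        exact hf
      · intro B _
        rfl
      · intro f _
        rfl
    rw [hcard, card_sumFiber (ι := Fin n × Fin m) q s]
    have : Fintype.card (Fin n × Fin m) = n * m := by simp
    rw [this]
    push_cast
    rw [mul_comm n m]
  -- exponent identity
  have hexp : (q:ℝ) ^ (n-1) * (q:ℝ) ^ (n*(m-1)) = (q:ℝ) ^ (m*n - 1) := by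
    rw [← pow_add]
    congr 1
    obtain ⟨n', rfl⟩ : ∃ n', n = n' + 1 := ⟨n - 1, by omega⟩
    obtain ⟨m', rfl⟩ : ∃ m', m = m' + 1 := ⟨m - 1, by omega⟩
    simp only [Nat.add_sub_cancel]
    have h : (m'+1)*(n'+1) = (n'+1)*m' + n' + 1 := by ring
    rw [h]
    omega
  -- per-pair TVD bound
  have tvd_sq : ∀ p ∈ eqSumPairs n q,
      (tvdMat (protOutInd m S1 p.1) (protOutInd m S1 p.2))^2
        ≤ ((q:ℝ) ^ (m*n - 1) / 4) *
            ∑ B : Fin n → Fin m → ZMod q, (protOutInd m S1 p.1 B - protOutInd m S1 p.2 B)^2 := by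
    intro p hp
    have hps : ∑ i, p.1 i = ∑ i, p.2 i := by
      simpa [eqSumPairs] using hp
    set t : Finset (Fin n → Fin m → ZMod q) :=
      Finset.univ.filter fun B => ∑ i, ∑ j, B i j = ∑ i, p.1 i with ht
    have hzero : ∀ B ∉ t, protOutInd m S1 p.1 B - protOutInd m S1 p.2 B = 0 := by
      intro B hB
      simp only [ht, Finset.mem_filter, Finset.mem_univ, true_and] at hB
      rw [protOutInd_eq_zero hm S1 p.1 B hB,
        protOutInd_eq_zero hm S1 p.2 B (by rw [← hps]; exact hB), sub_zero]
    have habs : ∑ B : Fin n → Fin m → ZMod q, |protOutInd m S1 p.1 B - protOutInd m S1 p.2 B|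
        = ∑ B ∈ t, |protOutInd m S1 p.1 B - protOutInd m S1 p.2 B| :=
      (Finset.sum_subset (Finset.subset_univ t)
        (fun B _ hB => by rw [hzero B hB, abs_zero])).symm
    have hCS : (∑ B ∈ t, |protOutInd m S1 p.1 B - protOutInd m S1 p.2 B|)^2
        ≤ (t.card : ℝ) * ∑ B ∈ t, (protOutInd m S1 p.1 B - protOutInd m S1 p.2 B)^2 := by
      have h := sq_sum_le_card_mul_sum_sq (s := t)
        (f := fun B => |protOutInd m S1 p.1 B - protOutInd m S1 p.2 B|)
      simpa [sq_abs] using h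
    have hcardt : (t.card : ℝ) = (q:ℝ) ^ (m*n - 1) := cardB (∑ i, p.1 i)
    have hle2 : ∑ B ∈ t, (protOutInd m S1 p.1 B - protOutInd m S1 p.2 B)^2
        ≤ ∑ B : Fin n → Fin m → ZMod q, (protOutInd m S1 p.1 B - protOutInd m S1 p.2 B)^2 :=
      Finset.sum_le_sum_of_subset_of_nonneg (Finset.subset_univ t)
        (fun _ _ _ => sq_nonneg _)
    have step1 : (tvdMat (protOutInd m S1 p.1) (protOutInd m S1 p.2))^2
        = (∑ B ∈ t, |protOutInd m S1 p.1 B - protOutInd m S1 p.2 B|)^2 / 4 := by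
      rw [tvdMat, ← habs]
      ring
    rw [step1]
    have h4 : (∑ B ∈ t, |protOutInd m S1 p.1 B - protOutInd m S1 p.2 B|)^2 / 4
        ≤ ((t.card : ℝ) * ∑ B ∈ t, (protOutInd m S1 p.1 B - protOutInd m S1 p.2 B)^2) / 4 := by
      linarith
    refine h4.trans ?_
    rw [hcardt]
    have hrearr : ((q:ℝ) ^ (m*n-1) *
        ∑ B ∈ t, (protOutInd m S1 p.1 B - protOutInd m S1 p.2 B)^2) / 4
        = ((q:ℝ) ^ (m*n-1) / 4) *
          ∑ B ∈ t, (protOutInd m S1 p.1 B - protOutInd m S1 p.2 B)^2 := by ring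
    rw [hrearr]
    exact mul_le_mul_of_nonneg_left hle2 (by positivity)
  -- expansion of the squared L2 distance
  have expand : ∑ p ∈ eqSumPairs n q,
        ∑ B : Fin n → Fin m → ZMod q, (protOutInd m S1 p.1 B - protOutInd m S1 p.2 B)^2
      = 2 * (∑ p ∈ eqSumPairs n q, ∑ B : Fin n → Fin m → ZMod q, (protOutInd m S1 p.1 B)^2)
        - 2 * (∑ p ∈ eqSumPairs n q,
            ∑ B : Fin n → Fin m → ZMod q, protOutInd m S1 p.1 B * protOutInd m S1 p.2 B) := by
    have h1 : ∀ p : (Fin n → ZMod q) × (Fin n → ZMod q),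
        ∑ B : Fin n → Fin m → ZMod q, (protOutInd m S1 p.1 B - protOutInd m S1 p.2 B)^2
          = ∑ B : Fin n → Fin m → ZMod q, (protOutInd m S1 p.1 B)^2
            + ∑ B : Fin n → Fin m → ZMod q, (protOutInd m S1 p.2 B)^2
            - 2 * ∑ B : Fin n → Fin m → ZMod q, protOutInd m S1 p.1 B * protOutInd m S1 p.2 B := by
      intro p
      rw [← Finset.sum_add_distrib, Finset.mul_sum, ← Finset.sum_sub_distrib]
      exact Finset.sum_congr rfl fun B _ => by ring
    rw [Finset.sum_congr rfl fun p _ => h1 p, Finset.sum_sub_distrib, Finset.sum_add_distrib,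
      ← Finset.mul_sum]
    have swapm : ∑ p ∈ eqSumPairs n q, ∑ B : Fin n → Fin m → ZMod q, (protOutInd m S1 p.2 B)^2
        = ∑ p ∈ eqSumPairs n q, ∑ B : Fin n → Fin m → ZMod q, (protOutInd m S1 p.1 B)^2 := by
      rw [decomp (fun p => ∑ B : Fin n → Fin m → ZMod q, (protOutInd m S1 p.2 B)^2),
        decomp (fun p => ∑ B : Fin n → Fin m → ZMod q, (protOutInd m S1 p.1 B)^2)]
      exact Finset.sum_congr rfl fun s _ => Finset.sum_comm
    rw [swapm]
    ring
  -- the inner-product sum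
  have hinner : ∑ p ∈ eqSumPairs n q,
        ∑ B : Fin n → Fin m → ZMod q, protOutInd m S1 p.1 B * protOutInd m S1 p.2 B
      = ((eqSumPairs n q).card : ℝ) / (q:ℝ) ^ (m*n - 1) := by
    rw [decomp (fun p => ∑ B : Fin n → Fin m → ZMod q,
      protOutInd m S1 p.1 B * protOutInd m S1 p.2 B)]
    have per_s : ∀ s : ZMod q,
        ∑ x ∈ (Finset.univ.filter fun x : Fin n → ZMod q => ∑ i, x i = s),
          ∑ x' ∈ (Finset.univ.filter fun x : Fin n → ZMod q => ∑ i, x i = s),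
            ∑ B : Fin n → Fin m → ZMod q, protOutInd m S1 x B * protOutInd m S1 x' B
        = (q:ℝ) ^ (m*n - 1) / ((q:ℝ) ^ (n*(m-1)))^2 := by
      intro s
      have hswap1 : ∀ x : Fin n → ZMod q,
          ∑ x' ∈ (Finset.univ.filter fun x : Fin n → ZMod q => ∑ i, x i = s),
            ∑ B : Fin n → Fin m → ZMod q, protOutInd m S1 x B * protOutInd m S1 x' B
          = ∑ B : Fin n → Fin m → ZMod q,
              ∑ x' ∈ (Finset.univ.filter fun x : Fin n → ZMod q => ∑ i, x i = s),
                protOutInd m S1 x B * protOutInd m S1 x' B := fun x => Finset.sum_comm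
      rw [Finset.sum_congr rfl fun x _ => hswap1 x, Finset.sum_comm]
      have hprod : ∀ B : Fin n → Fin m → ZMod q,
          ∑ x ∈ (Finset.univ.filter fun x : Fin n → ZMod q => ∑ i, x i = s),
            ∑ x' ∈ (Finset.univ.filter fun x : Fin n → ZMod q => ∑ i, x i = s),
              protOutInd m S1 x B * protOutInd m S1 x' B
          = ((if ∑ i, ∑ j, B i j = s then (1:ℝ) else 0) / (q:ℝ) ^ (n*(m-1)))
            * ((if ∑ i, ∑ j, B i j = s then (1:ℝ) else 0) / (q:ℝ) ^ (n*(m-1))) := by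
        intro B
        rw [← Finset.sum_mul_sum, sum_protOutInd_fiber hm hS s B]
      rw [Finset.sum_congr rfl fun B _ => hprod B]
      have hsq : ∀ B : Fin n → Fin m → ZMod q,
          ((if ∑ i, ∑ j, B i j = s then (1:ℝ) else 0) / (q:ℝ) ^ (n*(m-1)))
            * ((if ∑ i, ∑ j, B i j = s then (1:ℝ) else 0) / (q:ℝ) ^ (n*(m-1)))
          = (if ∑ i, ∑ j, B i j = s then (1:ℝ) else 0) / ((q:ℝ) ^ (n*(m-1)))^2 := by
        intro B
        split_ifs with h
        · rw [div_mul_div_comm, one_mul, sq]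
        · simp
      rw [Finset.sum_congr rfl fun B _ => hsq B, ← Finset.sum_div, Finset.sum_boole]
      congr 1
      exact cardB s
    rw [Finset.sum_congr rfl fun s _ => per_s s, Finset.sum_const, Finset.card_univ, ZMod.card,
      nsmul_eq_mul, cardP, ← hexp]
    field_simp
  -- sum of collisions
  have hcoll : ∑ p ∈ eqSumPairs n q, unshuffledCollision m S1 p.1
      = ∑ p ∈ eqSumPairs n q, ∑ B : Fin n → Fin m → ZMod q, (protOutInd m S1 p.1 B)^2 :=
    Finset.sum_congr rfl fun p _ => collision_eq hm S1 p.1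
  -- abbreviations
  set tS : ℝ := ∑ p ∈ eqSumPairs n q, tvdMat (protOutInd m S1 p.1) (protOutInd m S1 p.2) with htS
  set c : ℝ := ∑ p ∈ eqSumPairs n q, ∑ B : Fin n → Fin m → ZMod q, (protOutInd m S1 p.1 B)^2
    with hc
  set N : ℝ := ((eqSumPairs n q).card : ℝ) with hN
  set K : ℝ := (q:ℝ) ^ (m*n - 1) with hKdef
  -- Cauchy-Schwarz over the pairs
  have hCSP : tS^2 ≤ N * ∑ p ∈ eqSumPairs n q,
      (tvdMat (protOutInd m S1 p.1) (protOutInd m S1 p.2))^2 := by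
    have h := sq_sum_le_card_mul_sum_sq (s := eqSumPairs n q)
      (f := fun p => tvdMat (protOutInd m S1 p.1) (protOutInd m S1 p.2))
    exact h
  have hchain : tS^2 ≤ N * ((K/4) * (2*c - 2*(N/K))) := by
    refine hCSP.trans ?_
    have h1 : ∑ p ∈ eqSumPairs n q, (tvdMat (protOutInd m S1 p.1) (protOutInd m S1 p.2))^2
        ≤ ∑ p ∈ eqSumPairs n q, (K/4) *
            ∑ B : Fin n → Fin m → ZMod q, (protOutInd m S1 p.1 B - protOutInd m S1 p.2 B)^2 :=
      Finset.sum_le_sum tvd_sq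
    have h2 : ∑ p ∈ eqSumPairs n q, (K/4) *
          ∑ B : Fin n → Fin m → ZMod q, (protOutInd m S1 p.1 B - protOutInd m S1 p.2 B)^2
        = (K/4) * (2*c - 2*(N/K)) := by
      rw [← Finset.mul_sum, expand, hinner, hc]
    rw [← h2]
    exact mul_le_mul_of_nonneg_left h1 hP0.le
  have htS0 : (0:ℝ) ≤ tS := by
    rw [htS]
    refine Finset.sum_nonneg fun p _ => ?_
    rw [tvdMat]
    positivity
  have hcalc : N * ((K/4) * (2*c - 2*(N/K))) = N^2 * ((K * (c/N) - 1)/2) := by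
    field_simp
    ring
  have hNsq : (0:ℝ) < N^2 := by positivity
  have hy0 : (0:ℝ) ≤ K * (c/N) - 1 := by
    have h1 : (0:ℝ) ≤ N^2 * ((K * (c/N) - 1)/2) := le_trans (sq_nonneg tS) (hchain.trans_eq hcalc)
    have h3 : (0:ℝ) ≤ (K * (c/N) - 1)/2 := (mul_nonneg_iff_of_pos_left hNsq).mp h1
    linarith
  rw [hcoll]
  have hfinal : (tS/N)^2 ≤ K * (c/N) - 1 := by
    have h1 : tS^2 ≤ N^2 * ((K * (c/N) - 1)/2) := hchain.trans_eq hcalc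
    rw [div_pow, div_le_iff₀ hNsq, mul_comm]
    have h5 : N^2 * ((K * (c/N) - 1)/2) ≤ N^2 * (K * (c/N) - 1) :=
      mul_le_mul_of_nonneg_left (by linarith) (sq_nonneg N)
    linarith
  exact (Real.le_sqrt (div_nonneg htS0 hP0.le) hy0).mpr hfinal
end
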